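/- Singularity of the Okamoto–Wunsch functions (Example 2.1 (iii)): Let 0 < a < b < 1, m = 3, f_0(x) = a x, f_1(x) = a + (b − a) x, f_2(x) = (1 − b) x + b on X = [0,1], and let G = f_{a,b} be the unique continuous solution of de Rham's equation. Then α = −log_3(a(b − a)(1 − b))/3, α > 1 if and only if (a,b) ≠ (1/3,2/3), and consequently for (a,b) ≠ (1/3,2/3) the function f_{a,b} satisfies f_{a,b}′(t) = 0 for Lebesgue-a.e. t ∈ (0,1); in particular f_{a,b} is a singular function. -/

import Mathlib

open MeasureTheory Filter Set Topology

noncomputable section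

/-- The first digit `A₁(t) = ⌊m t⌋` of the `m`-adic expansion of `t ∈ [0,1)`. -/
def A1 (m : ℕ) (t : ℝ) : ℕ := (⌊(m : ℝ) * t⌋).toNat

/-- The shift map `Ht = m t - ⌊m t⌋` on `[0,1)`. -/
def Hmap (m : ℕ) (t : ℝ) : ℝ := (m : ℝ) * t - ⌊(m : ℝ) * t⌋

/-- The maps `f₀(x) = ax`, `f₁(x) = a + (b-a)x`, `f₂(x) = (1-b)x + b` of Example 2.1 (iii). -/
def fOW (a b : ℝ) : ℕ → ℝ → ℝ := fun i x =>
  if i = 0 then a * x else if i = 1 then a + (b - a) * x else (1 - b) * x + b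

/-- `α = ∫₀¹ -log₃ |f'_{A₁(t)}(G(Ht))| dt` for the Okamoto–Wunsch system. -/
def alphaOW (a b : ℝ) (G : ℝ → ℝ) : ℝ :=
  ∫ t in Set.Ico (0 : ℝ) 1, -Real.logb 3 |deriv (fOW a b (A1 3 t)) (G (Hmap 3 t))|

end

theorem deriv_fOW (a b : ℝ) (i : ℕ) (y : ℝ) :
    deriv (fOW a b i) y = if i = 0 then a else if i = 1 then b - a else 1 - b := by
  have e0 : fOW a b 0 = fun x => a * x := by funext x; simp [fOW]
  have e1 : fOW a b 1 = fun x => a + (b - a) * x := by funext x; simp [fOW]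
  match i with
  | 0 => rw [e0, deriv_const_mul_field]; simp
  | 1 =>
    rw [if_neg one_ne_zero, if_pos rfl, e1]
    rw [show (fun x => a + (b - a) * x) = (fun x => (b-a) * x + a) by funext x; ring]
    rw [deriv_add_const, deriv_const_mul_field]; simp
  | (n+2) =>
    have e2 : fOW a b (n+2) = fun x => (1 - b) * x + b := by funext x; simp [fOW]
    simp only [show n+2 ≠ 0 by omega, show n+2 ≠ 1 by omega, if_false]
    rw [e2, deriv_add_const, deriv_const_mul_field]; simp

theorem alphaOW_eq (a b : ℝ) (ha : 0 < a) (hab : a < b) (hb : b < 1) (G : ℝ → ℝ) :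
    alphaOW a b G = -Real.logb 3 (a * (b - a) * (1 - b)) / 3 := by
  have h3 : (0:ℝ) ≤ 1/3 := by norm_num
  have hI : Ico (0:ℝ) (1/3) ∪ Ico (1/3) (2/3) ∪ Ico (2/3) 1 = Ico (0:ℝ) 1 := by
    rw [Ico_union_Ico_eq_Ico (by norm_num) (by norm_num),
      Ico_union_Ico_eq_Ico (by norm_num) (by norm_num)]
  have key : ∀ (c d : ℝ) (v : ℝ), c ≤ d → (∀ t ∈ Ico c d,
      -Real.logb 3 |deriv (fOW a b (A1 3 t)) (G (Hmap 3 t))| = v) →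
      ∫ t in Ico c d, -Real.logb 3 |deriv (fOW a b (A1 3 t)) (G (Hmap 3 t))| = (d - c) * v
      ∧ IntegrableOn (fun t => -Real.logb 3 |deriv (fOW a b (A1 3 t)) (G (Hmap 3 t))|)
        (Ico c d) volume := by
    intro c d v hcd h
    constructor
    · rw [setIntegral_congr_fun measurableSet_Ico h, setIntegral_const, measureReal_def, Real.volume_Ico,
        smul_eq_mul, ENNReal.toReal_ofReal (by linarith)]
    · exact (integrableOn_congr_fun h measurableSet_Ico).2 (integrableOn_const
        ((by rw [Real.volume_Ico]; exact ENNReal.ofReal_lt_top.ne)))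
  have e0 : ∀ t ∈ Ico (0:ℝ) (1/3),
      -Real.logb 3 |deriv (fOW a b (A1 3 t)) (G (Hmap 3 t))| = -Real.logb 3 a := by
    intro t ht
    have : ⌊(3:ℝ) * t⌋ = 0 := by
      rw [Int.floor_eq_zero_iff]; constructor <;> [linarith [ht.1]; skip]
      simp only [mem_Ico] at ht ⊢; linarith [ht.2]
    simp [A1, this, deriv_fOW, abs_of_pos ha]
  have e1 : ∀ t ∈ Ico (1/3:ℝ) (2/3),
      -Real.logb 3 |deriv (fOW a b (A1 3 t)) (G (Hmap 3 t))| = -Real.logb 3 (b - a) := by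
    intro t ht
    have : ⌊(3:ℝ) * t⌋ = 1 := by
      rw [Int.floor_eq_iff]
      push_cast
      exact ⟨by linarith [ht.1], by linarith [ht.2]⟩
    simp [A1, this, deriv_fOW, abs_of_pos (by linarith : (0:ℝ) < b - a)]
  have e2 : ∀ t ∈ Ico (2/3:ℝ) 1,
      -Real.logb 3 |deriv (fOW a b (A1 3 t)) (G (Hmap 3 t))| = -Real.logb 3 (1 - b) := by
    intro t ht
    have : ⌊(3:ℝ) * t⌋ = 2 := by
      rw [Int.floor_eq_iff]
      push_cast
      exact ⟨by linarith [ht.1], by linarith [ht.2]⟩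
    simp [A1, this, deriv_fOW, abs_of_pos (by linarith : (0:ℝ) < 1 - b)]
  obtain ⟨v0, i0⟩ := key 0 (1/3) _ (by norm_num) e0
  obtain ⟨v1, i1⟩ := key (1/3) (2/3) _ (by norm_num) e1
  obtain ⟨v2, i2⟩ := key (2/3) 1 _ (by norm_num) e2
  have hd1 : Disjoint (Ico (0:ℝ) (1/3)) (Ico (1/3:ℝ) (2/3)) := Ico_disjoint_Ico_same
  have hd2 : Disjoint (Ico (0:ℝ) (1/3) ∪ Ico (1/3:ℝ) (2/3)) (Ico (2/3:ℝ) 1) := by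
    rw [Ico_union_Ico_eq_Ico (by norm_num) (by norm_num)]
    exact Ico_disjoint_Ico_same
  rw [alphaOW, ← hI, setIntegral_union hd2 measurableSet_Ico
      ((i0.union i1)) i2, setIntegral_union hd1 measurableSet_Ico i0 i1, v0, v1, v2]
  have l1 : Real.logb 3 (a * (b-a) * (1-b)) =
      Real.logb 3 a + Real.logb 3 (b-a) + Real.logb 3 (1-b) := by
    rw [Real.logb_mul (by nlinarith) (by nlinarith), Real.logb_mul (by nlinarith) (by nlinarith)]
  rw [l1]; ring

theorem part2 (a b : ℝ) (ha : 0 < a) (hab : a < b) (hb : b < 1) :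
    1 < -Real.logb 3 (a * (b - a) * (1 - b)) / 3 ↔ ¬(a = 1 / 3 ∧ b = 2 / 3) := by
  have hP : 0 < a * (b - a) * (1 - b) := mul_pos (mul_pos ha (sub_pos.2 hab)) (sub_pos.2 hb)
  have h27 : Real.logb 3 (1/27 : ℝ) = -3 := by
    rw [one_div, Real.logb_inv, show (27:ℝ) = 3^(3:ℕ) by norm_num, Real.logb_pow,
      Real.logb_self_eq_one (by norm_num)]
    norm_num
  have key : a * (b - a) * (1 - b) < 1/27 ↔ ¬(a = 1 / 3 ∧ b = 2 / 3) := by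
    constructor
    · rintro h ⟨rfl, rfl⟩; norm_num at h
    · intro h
      rcases not_and_or.1 h with h' | h'
      · have hne := sub_ne_zero.2 h'
        have h2 : 0 < (a - 1/3)^2 := by positivity
        nlinarith [sq_nonneg (b - a - (1 - b)), sq_nonneg (a - (b-a)), sq_nonneg (a - (1-b)), sq_nonneg (a + b - 1)]
      · have hne := sub_ne_zero.2 h'
        have h2 : 0 < (b - 2/3)^2 := by positivity
        nlinarith [sq_nonneg (b - a - (1 - b)), sq_nonneg (a - (b-a)), sq_nonneg (a - (1-b)), sq_nonneg (a + b - 1)]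
  rw [← key]
  constructor
  · intro h
    have : Real.logb 3 (a * (b - a) * (1 - b)) < -3 := by linarith
    rw [← h27] at this
    exact (Real.logb_lt_logb_iff (by norm_num) hP (by norm_num)).1 this
  · intro h
    have := (Real.logb_lt_logb_iff (by norm_num : (1:ℝ) < 3) hP (by norm_num : (0:ℝ) < 1/27)).2 h
    rw [h27] at this
    linarith

/-- slope coefficients -/
def pOW (a b : ℝ) : ℕ → ℝ := fun i => if i = 0 then a else if i = 1 then b - a else 1 - b

theorem pOW_pos (a b : ℝ) (ha : 0 < a) (hab : a < b) (hb : b < 1) (i : ℕ) : 0 < pOW a b i := by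
  unfold pOW; split_ifs <;> linarith

theorem fOW_affine (a b : ℝ) (i : ℕ) (y z : ℝ) :
    fOW a b i (y + z) = fOW a b i y + pOW a b i * z := by
  unfold fOW pOW; split_ifs <;> ring

theorem fOW_diff (a b : ℝ) (i : ℕ) :
    fOW a b i 1 - fOW a b i 0 = pOW a b i := by
  unfold fOW pOW; split_ifs <;> ring

section
variable (a b : ℝ) (G : ℝ → ℝ)
variable (hGeq : ∀ i : ℕ, i < 3 → ∀ t : ℝ, (i : ℝ) / 3 ≤ t → t ≤ ((i : ℝ) + 1) / 3 →
      G t = fOW a b i (G (3 * t - i)))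
variable (hG0 : G 0 = 0) (hG1 : G 1 = 1)

include hGeq hG0 hG1 in
theorem keyA : ∀ n : ℕ, ∀ k : ℕ, k < 3^n → ∀ x ∈ Set.Icc (0:ℝ) 1,
    G (((k:ℝ) + x)/3^n) = G (k/3^n) + (G (((k:ℝ)+1)/3^n) - G (k/3^n)) * G x := by
  intro n
  induction n with
  | zero =>
    intro k hk x hx
    interval_cases k
    simp [hG0, hG1]
  | succ n ih =>
    intro k hk x hx
    set i := k / 3^n with hi
    set r := k % 3^n with hr
    have h3n : 0 < 3^n := Nat.pow_pos (by norm_num)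
    have hkir : 3^n * i + r = k := Nat.div_add_mod k (3^n)
    have hilt : i < 3 := by
      rw [hi]
      exact Nat.div_lt_of_lt_mul (by rw [pow_succ] at hk; omega)
    have hrlt : r < 3^n := Nat.mod_lt _ h3n
    have main : ∀ y ∈ Set.Icc (0:ℝ) 1,
        G (((k:ℝ) + y)/3^(n+1)) =
          fOW a b i (G (r/3^n)) + pOW a b i * ((G (((r:ℝ)+1)/3^n) - G (r/3^n)) * G y) := by
      intro y hy
      have hu : ((r:ℝ) + y)/3^n ∈ Set.Icc (0:ℝ) 1 := by
        constructor
        · exact div_nonneg (add_nonneg (Nat.cast_nonneg r) hy.1) (by positivity)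
        · rw [div_le_one (by positivity)]
          have : (r:ℝ) ≤ 3^n - 1 := by
            have : (r:ℝ) + 1 ≤ 3^n := by exact_mod_cast hrlt
            linarith
          linarith [hy.2]
      have hcast : ((k:ℝ) + y)/3^(n+1) = ((i:ℝ) + ((r:ℝ) + y)/3^n)/3 := by
        have : (k:ℝ) = 3^n * i + r := by exact_mod_cast hkir.symm
        rw [this]
        field_simp
        ring
      have hb1 : (i:ℝ)/3 ≤ ((k:ℝ) + y)/3^(n+1) := by
        rw [hcast]; linarith [hu.1]
      have hb2 : ((k:ℝ) + y)/3^(n+1) ≤ ((i:ℝ)+1)/3 := by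
        rw [hcast]; linarith [hu.2]
      have hshift : 3 * (((k:ℝ) + y)/3^(n+1)) - i = ((r:ℝ) + y)/3^n := by
        rw [hcast]; ring
      rw [hGeq i hilt _ hb1 hb2, hshift, ih r hrlt y hy, fOW_affine]
    have h0 : (0:ℝ) ∈ Set.Icc (0:ℝ) 1 := ⟨le_refl 0, zero_le_one⟩
    have h1 : (1:ℝ) ∈ Set.Icc (0:ℝ) 1 := ⟨zero_le_one, le_refl 1⟩
    have e0 : G ((k:ℝ)/3^(n+1)) = fOW a b i (G (r/3^n)) := by
      have := main 0 h0
      rw [hG0] at this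
      simpa using this
    have e1 : G (((k:ℝ)+1)/3^(n+1)) = fOW a b i (G (r/3^n))
        + pOW a b i * (G (((r:ℝ)+1)/3^n) - G (r/3^n)) := by
      have := main 1 h1
      rw [hG1] at this
      simpa using this
    rw [main x hx, e0, e1]
    ring

include hGeq hG0 hG1 in
theorem keyB : ∀ n k k' : ℕ, k < 3^n → k' < 3 →
    G ((((3*k+k'):ℕ):ℝ)/3^(n+1) + 1/3^(n+1)) - G ((((3*k+k'):ℕ):ℝ)/3^(n+1)) =
      pOW a b k' * (G (((k:ℝ)+1)/3^n) - G ((k:ℝ)/3^n)) := by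
  intro n k k' hk hk'
  have main : ∀ y ∈ Set.Icc (0:ℝ) 1,
      G (((((3*k+k'):ℕ):ℝ) + y)/3^(n+1)) =
        G ((k:ℝ)/3^n) + (G (((k:ℝ)+1)/3^n) - G ((k:ℝ)/3^n)) * fOW a b k' (G y) := by
    intro y hy
    have hu : ((k':ℝ) + y)/3 ∈ Set.Icc (0:ℝ) 1 := by
      constructor
      · exact div_nonneg (add_nonneg (Nat.cast_nonneg k') hy.1) (by norm_num)
      · rw [div_le_one (by norm_num)]
        have : (k':ℝ) ≤ 2 := by exact_mod_cast Nat.lt_succ_iff.1 hk'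
        linarith [hy.2]
    have hcast : ((((3*k+k'):ℕ):ℝ) + y)/3^(n+1) = ((k:ℝ) + ((k':ℝ) + y)/3)/3^n := by
      push_cast
      field_simp
      ring
    have hb1 : (k':ℝ)/3 ≤ ((k':ℝ) + y)/3 := by linarith [hy.1]
    have hb2 : ((k':ℝ) + y)/3 ≤ ((k':ℝ)+1)/3 := by linarith [hy.2]
    have hshift : 3 * (((k':ℝ) + y)/3) - k' = y := by ring
    rw [hcast, keyA a b G hGeq hG0 hG1 n k hk _ hu, hGeq k' hk' _ hb1 hb2, hshift]
  have h0 : (0:ℝ) ∈ Set.Icc (0:ℝ) 1 := ⟨le_refl 0, zero_le_one⟩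
  have h1 : (1:ℝ) ∈ Set.Icc (0:ℝ) 1 := ⟨zero_le_one, le_refl 1⟩
  have e0 := main 0 h0
  have e1 := main 1 h1
  rw [hG0] at e0
  rw [hG1] at e1
  have harg : (((3*k+k':ℕ):ℝ))/3^(n+1) + 1/3^(n+1) = ((((3*k+k'):ℕ):ℝ) + 1)/3^(n+1) := by
    ring
  rw [harg, e1, show ((((3*k+k'):ℕ):ℝ))/3^(n+1) = ((((3*k+k'):ℕ):ℝ) + 0)/3^(n+1) by ring, e0,
    ← fOW_diff a b k']
  ring

include hGeq hG0 hG1 in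
theorem keyC (ha : 0 < a) (hab : a < b) (hb : b < 1) :
    ∀ n k : ℕ, k < 3^n → 0 < G (((k:ℝ)+1)/3^n) - G ((k:ℝ)/3^n) := by
  intro n
  induction n with
  | zero =>
    intro k hk
    interval_cases k
    simp [hG0, hG1]
  | succ n ih =>
    intro k hk
    have hdm : 3 * (k / 3) + k % 3 = k := Nat.div_add_mod k 3
    have hq : k / 3 < 3^n := by
      apply Nat.div_lt_of_lt_mul
      rw [pow_succ] at hk; omega
    have hr : k % 3 < 3 := Nat.mod_lt _ (by norm_num)
    have := keyB a b G hGeq hG0 hG1 n (k/3) (k%3) hq hr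
    rw [hdm] at this
    have h2 : ((k:ℝ))/3^(n+1) + 1/3^(n+1) = ((k:ℝ)+1)/3^(n+1) := by ring
    rw [h2] at this
    rw [this]
    exact mul_pos (pOW_pos a b ha hab hb _) (ih _ hq)

include hGeq hG0 hG1 in
theorem keyD (ha : 0 < a) (hab : a < b) (hb : b < 1) :
    ∀ n k l : ℕ, k ≤ l → l ≤ 3^n → G ((k:ℝ)/3^n) ≤ G ((l:ℝ)/3^n) := by
  intro n k l
  induction l with
  | zero => intro hkl _; interval_cases k; exact le_refl _
  | succ l ih =>
    intro hkl hl
    rcases Nat.lt_or_ge k (l+1) with h | h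
    · have h1 : G ((k:ℝ)/3^n) ≤ G ((l:ℝ)/3^n) := ih (by omega) (by omega)
      have h2 := keyC a b G hGeq hG0 hG1 ha hab hb n l (by omega)
      push_cast
      push_cast at h1 h2
      linarith
    · have : k = l + 1 := by omega
      subst this
      push_cast
      linarith

include hGeq hG0 hG1 in
theorem keyE (ha : 0 < a) (hab : a < b) (hb : b < 1)
    (hGc : ContinuousOn G (Set.Icc 0 1)) : MonotoneOn G (Set.Icc (0:ℝ) 1) := by
  intro s hs t ht hst
  rcases eq_or_lt_of_le hst with rfl | hlt
  · exact le_refl _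
  have hts : 0 < t - s := by linarith
  set u : ℕ → ℝ := fun j => ((⌈s*3^j⌉.toNat : ℝ))/3^j with hu
  set v : ℕ → ℝ := fun j => ((⌊t*3^j⌋.toNat : ℝ))/3^j with hv
  have hsnn : 0 ≤ s := hs.1
  have htnn : 0 ≤ t := le_trans hsnn hst
  have hceil : ∀ j : ℕ, ((⌈s*3^j⌉.toNat : ℝ)) = (⌈s*3^j⌉ : ℝ) := by
    intro j
    have : (0:ℤ) ≤ ⌈s*3^j⌉ := Int.ceil_nonneg (by positivity)
    exact_mod_cast Int.toNat_of_nonneg this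
  have hfloor : ∀ j : ℕ, ((⌊t*3^j⌋.toNat : ℝ)) = (⌊t*3^j⌋ : ℝ) := by
    intro j
    have : (0:ℤ) ≤ ⌊t*3^j⌋ := Int.floor_nonneg.2 (by positivity)
    exact_mod_cast Int.toNat_of_nonneg this
  have hub : ∀ j, s ≤ u j ∧ u j < s + 1/3^j := by
    intro j
    have h3 : (0:ℝ) < 3^j := by positivity
    constructor
    · simp only [hu]; rw [hceil j, le_div_iff₀ h3]
      exact Int.le_ceil _
    · simp only [hu]; rw [hceil j, div_lt_iff₀ h3]
      have := Int.ceil_lt_add_one (s*3^j)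
      have heq : (s + 1/3^j)*3^j = s*3^j + 1 := by field_simp
      linarith
  have hvb : ∀ j, t - 1/3^j < v j ∧ v j ≤ t := by
    intro j
    have h3 : (0:ℝ) < 3^j := by positivity
    constructor
    · simp only [hv]; rw [hfloor j, lt_div_iff₀ h3]
      have := Int.lt_floor_add_one (t*3^j)
      have heq : (t - 1/3^j)*3^j = t*3^j - 1 := by field_simp
      linarith
    · simp only [hv]; rw [hfloor j, div_le_iff₀ h3]
      exact Int.floor_le _
  have humem : ∀ j, u j ∈ Set.Icc (0:ℝ) 1 := by
    intro j
    have h3 : (0:ℝ) < 3^j := by positivity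
    constructor
    · positivity
    · simp only [hu]; rw [hceil j, div_le_one h3]
      have : ⌈s*3^j⌉ ≤ (3:ℤ)^j := by
        apply Int.ceil_le.2
        push_cast
        nlinarith [hs.2]
      calc ((⌈s*3^j⌉:ℝ)) ≤ ((3:ℤ)^j : ℝ) := by exact_mod_cast this
        _ = 3^j := by push_cast; ring
  have hvmem : ∀ j, v j ∈ Set.Icc (0:ℝ) 1 := by
    intro j
    refine ⟨by positivity, le_trans (hvb j).2 ht.2⟩
  have h13 : Tendsto (fun j : ℕ => (1:ℝ)/3^j) atTop (𝓝 0) := by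
    simp_rw [one_div, ← inv_pow]
    exact tendsto_pow_atTop_nhds_zero_of_lt_one (by norm_num) (by norm_num)
  have hadd : Tendsto (fun j : ℕ => s + 1/3^j) atTop (𝓝 s) := by
    have := tendsto_const_nhds.add h13 (f := fun _ : ℕ => s)
    rw [add_zero] at this
    exact this
  have hsub : Tendsto (fun j : ℕ => t - 1/3^j) atTop (𝓝 t) := by
    have := tendsto_const_nhds.sub h13 (f := fun _ : ℕ => t)
    rw [sub_zero] at this
    exact this
  have hut : Tendsto u atTop (𝓝 s) :=
    tendsto_of_tendsto_of_tendsto_of_le_of_le (tendsto_const_nhds) hadd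
      (fun j => (hub j).1) (fun j => le_of_lt (hub j).2)
  have hvt : Tendsto v atTop (𝓝 t) :=
    tendsto_of_tendsto_of_tendsto_of_le_of_le hsub (tendsto_const_nhds)
      (fun j => le_of_lt (hvb j).1) (fun j => (hvb j).2)
  have hGu : Tendsto (fun j => G (u j)) atTop (𝓝 (G s)) :=
    ((hGc s hs).tendsto).comp
      (tendsto_nhdsWithin_of_tendsto_nhds_of_eventually_within _ hut
        (Eventually.of_forall humem))
  have hGv : Tendsto (fun j => G (v j)) atTop (𝓝 (G t)) :=
    ((hGc t ht).tendsto).comp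
      (tendsto_nhdsWithin_of_tendsto_nhds_of_eventually_within _ hvt
        (Eventually.of_forall hvmem))
  refine le_of_tendsto_of_tendsto hGu hGv ?_
  have hev : ∀ᶠ j : ℕ in atTop, 2/3^j < t - s := by
    have := h13.const_mul 2
    simp only [mul_zero] at this
    filter_upwards [this.eventually (eventually_lt_nhds hts)] with j hj
    calc 2/3^j = 2 * (1/3^j) := by ring
      _ < t - s := hj
  filter_upwards [hev] with j hj
  have h3 : (0:ℝ) < 3^j := by positivity
  have hKL : ⌈s*3^j⌉.toNat ≤ ⌊t*3^j⌋.toNat := by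
    have hj' : 2 < (t-s)*3^j := (div_lt_iff₀ h3).1 hj
    have hZ : ⌈s*3^j⌉ ≤ ⌊t*3^j⌋ := by
      have hr : ((⌈s*3^j⌉:ℝ)) < ((⌊t*3^j⌋:ℝ)) + 1 := by
        have c1 := Int.ceil_lt_add_one (s*3^j)
        have c2 := Int.lt_floor_add_one (t*3^j)
        nlinarith
      have : ⌈s*3^j⌉ < ⌊t*3^j⌋ + 1 := by exact_mod_cast hr
      omega
    exact Int.toNat_le_toNat hZ
  have hL3 : ⌊t*3^j⌋.toNat ≤ 3^j := by
    have : ((⌊t*3^j⌋.toNat : ℝ)) ≤ ((3:ℝ))^j := by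
      rw [hfloor j]
      calc ((⌊t*3^j⌋:ℝ)) ≤ t*3^j := Int.floor_le _
        _ ≤ 3^j := by nlinarith [ht.2]
    have h2' : ((⌊t*3^j⌋.toNat:ℝ)) ≤ ((3^j : ℕ):ℝ) := by push_cast; push_cast at this; linarith
    exact_mod_cast h2'
  exact keyD a b G hGeq hG0 hG1 ha hab hb j _ _ hKL hL3

include hGeq hG0 hG1 in
theorem keyF (ha : 0 < a) (hab : a < b) (hb : b < 1)
    (hGc : ContinuousOn G (Set.Icc 0 1)) : StrictMonoOn G (Set.Icc (0:ℝ) 1) := by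
  have hmono := keyE a b G hGeq hG0 hG1 ha hab hb hGc
  intro s hs t ht hst
  have hts : 0 < t - s := by linarith
  obtain ⟨n, hn⟩ := pow_unbounded_of_one_lt (2/(t-s)) (by norm_num : (1:ℝ) < 3)
  have h3 : (0:ℝ) < 3^n := by positivity
  have h2n : 2/3^n < t - s := by
    rw [div_lt_iff₀ h3]
    rw [div_lt_iff₀ hts] at hn
    nlinarith
  have hsnn : 0 ≤ s := hs.1
  have hfl : (0:ℤ) ≤ ⌊s*3^n⌋ := Int.floor_nonneg.2 (by positivity)
  set K : ℕ := (⌊s*3^n⌋ + 1).toNat with hK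
  have hKc : (K:ℝ) = (⌊s*3^n⌋:ℝ) + 1 := by
    have h : ((⌊s*3^n⌋+1).toNat : ℤ) = ⌊s*3^n⌋ + 1 := Int.toNat_of_nonneg (by omega)
    rw [hK]
    exact_mod_cast h
  have h1 : s < (K:ℝ)/3^n := by
    rw [lt_div_iff₀ h3, hKc]
    have := Int.lt_floor_add_one (s*3^n)
    linarith
  have h2 : ((K:ℝ)+1)/3^n < t := by
    rw [div_lt_iff₀ h3, hKc]
    have h4 := Int.floor_le (s*3^n)
    rw [div_lt_iff₀ h3] at h2n
    nlinarith
  have hK3 : K < 3^n := by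
    have hr : ((K:ℝ)+1) < 3^n := by
      have h4 : ((K:ℝ)+1)/3^n < 1 := lt_of_lt_of_le h2 ht.2
      exact (div_lt_one h3).1 h4
    have : ((K+1:ℕ):ℝ) < ((3^n : ℕ):ℝ) := by push_cast; linarith
    have := Nat.cast_lt (α := ℝ) |>.1 this
    omega
  have mem1 : (K:ℝ)/3^n ∈ Set.Icc (0:ℝ) 1 := by
    constructor
    · positivity
    · have : (K:ℝ)/3^n < t := by
        apply lt_trans ?_ h2
        rw [div_lt_div_iff₀ h3 h3]
        nlinarith
      linarith [ht.2]
  have mem2 : ((K:ℝ)+1)/3^n ∈ Set.Icc (0:ℝ) 1 := by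
    constructor
    · positivity
    · linarith [ht.2]
  have c := keyC a b G hGeq hG0 hG1 ha hab hb n K hK3
  calc G s ≤ G ((K:ℝ)/3^n) := hmono hs mem1 (le_of_lt h1)
    _ < G (((K:ℝ)+1)/3^n) := by linarith
    _ ≤ G t := hmono mem2 ht (le_of_lt h2)

set_option maxHeartbeats 2000000 in
include hGeq hG0 hG1 in
theorem keyG (ha : 0 < a) (hab : a < b) (hb : b < 1)
    (hGc : ContinuousOn G (Set.Icc 0 1)) (hne : ¬(a = 1/3 ∧ b = 2/3)) :
    ∀ᵐ t ∂(volume.restrict (Set.Ioo (0:ℝ) 1)),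
      HasDerivWithinAt G 0 (Set.Icc (0:ℝ) 1) t := by
  classical
  set Gt : ℝ → ℝ := fun x => G (min 1 (max 0 x)) with hGt
  have hclamp : ∀ x : ℝ, min 1 (max 0 x) ∈ Set.Icc (0:ℝ) 1 :=
    fun x => ⟨le_min zero_le_one (le_max_left 0 x), min_le_left _ _⟩
  have hGteq : ∀ x ∈ Set.Icc (0:ℝ) 1, Gt x = G x := by
    intro x hx
    rw [hGt]
    simp only []
    rw [max_eq_right hx.1, min_eq_right hx.2]
  have hmonoG := keyE a b G hGeq hG0 hG1 ha hab hb hGc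
  have hGtmono : Monotone Gt := by
    intro x y hxy
    exact hmonoG (hclamp x) (hclamp y)
      (min_le_min (le_refl 1) (max_le_max (le_refl 0) hxy))
  set C : Set ℝ := Set.range (fun q : ℤ × ℕ => ((q.1:ℝ)/2)/3^q.2) with hCdef
  have hCc : C.Countable := Set.countable_range _
  have claim : ∀ t ∈ Set.Ioo (0:ℝ) 1, t ∉ C → DifferentiableAt ℝ Gt t →
      HasDerivWithinAt G 0 (Set.Icc (0:ℝ) 1) t := by
    intro t ht hC hdiff
    set c := deriv Gt t with hcdef
    have hder : HasDerivAt Gt c t := hdiff.hasDerivAt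
    have htpos : 0 < t := ht.1
    have htlt : t < 1 := ht.2
    have hnt : ∀ n : ℕ, ((⌊t*3^n⌋ : ℝ)) < t*3^n := by
      intro n
      rcases lt_or_eq_of_le (Int.floor_le (t*3^n)) with h | h
      · exact h
      · exfalso
        apply hC
        refine ⟨(2*⌊t*3^n⌋, n), ?_⟩
        have h3 : (0:ℝ) < 3^n := by positivity
        push_cast
        rw [h]
        field_simp
    set kk : ℕ → ℤ := fun n => ⌊t*3^n⌋ with hkk
    have hk0 : ∀ n, 0 ≤ kk n := fun n => Int.floor_nonneg.2 (by positivity)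
    have hk1 : ∀ n, kk n < 3^n := by
      intro n
      apply Int.floor_lt.2
      push_cast
      nlinarith [pow_pos (show (0:ℝ) < 3 by norm_num) n]
    set l : ℕ → ℝ := fun n => ((kk n : ℝ))/3^n with hl
    set r : ℕ → ℝ := fun n => ((kk n : ℝ)+1)/3^n with hr
    set S : ℕ → ℝ := fun n => G (r n) - G (l n) with hS
    have hcastN : ∀ n, (((kk n).toNat : ℝ)) = ((kk n : ℝ)) := by
      intro n
      exact_mod_cast Int.toNat_of_nonneg (hk0 n)
    have hNlt : ∀ n, (kk n).toNat < 3^n := by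
      intro n
      have h2 : ((kk n).toNat : ℤ) = kk n := Int.toNat_of_nonneg (hk0 n)
      have h3 : ((kk n).toNat : ℤ) < ((3^n : ℕ) : ℤ) := by
        rw [h2]; push_cast; exact hk1 n
      exact_mod_cast h3
    have hSpos : ∀ n, 0 < S n := by
      intro n
      have := keyC a b G hGeq hG0 hG1 ha hab hb n ((kk n).toNat) (hNlt n)
      rw [hcastN n] at this
      exact this
    -- digits
    set d : ℕ → ℤ := fun n => kk (n+1) - 3 * kk n with hd
    have hpow : ∀ n : ℕ, t * 3^(n+1) = 3 * (t * 3^n) := by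
      intro n; ring
    have hd0 : ∀ n, 0 ≤ d n := by
      intro n
      have h1 : 3 * kk n ≤ kk (n+1) := by
        apply Int.le_floor.2
        rw [hpow n]
        push_cast
        have := Int.floor_le (t*3^n)
        linarith
      simp only [hd]; omega
    have hd3 : ∀ n, d n < 3 := by
      intro n
      have h1 : kk (n+1) < 3 * kk n + 3 := by
        apply Int.floor_lt.2
        rw [hpow n]
        push_cast
        have := Int.lt_floor_add_one (t*3^n)
        linarith
      simp only [hd]; omega
    have hdrec : ∀ n, kk (n+1) = 3 * kk n + d n := by
      intro n; simp only [hd]; ring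
    have hdN : ∀ n, (((d n).toNat : ℝ)) = ((d n : ℝ)) := by
      intro n
      exact_mod_cast Int.toNat_of_nonneg (hd0 n)
    have hdNlt : ∀ n, (d n).toNat < 3 := by
      intro n
      have := hd3 n; have := hd0 n; omega
    have hrec : ∀ n, S (n+1) = pOW a b ((d n).toNat) * S n := by
      intro n
      have hB := keyB a b G hGeq hG0 hG1 n ((kk n).toNat) ((d n).toNat)
        (hNlt n) (hdNlt n)
      have hcast1 : ((((3*(kk n).toNat+(d n).toNat):ℕ):ℝ)) = ((kk (n+1) : ℝ)) := by
        push_cast [hcastN n, hdN n]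
        rw [hdrec n]
        push_cast
        ring
      rw [hcast1, hcastN n] at hB
      have e1 : ((kk (n+1):ℝ))/3^(n+1) + 1/3^(n+1) = r (n+1) := by
        simp only [hr]; ring
      have e2 : ((kk (n+1):ℝ))/3^(n+1) = l (n+1) := rfl
      rw [e1, e2] at hB
      simpa [hS, hr, hl] using hB
    set R : ℕ → ℝ := fun n => S n * 3^n with hR
    have hRpos : ∀ n, 0 < R n := fun n => mul_pos (hSpos n) (by positivity)
    -- l and r bounds
    have hlt : ∀ n, l n < t := by
      intro n
      have h3 : (0:ℝ) < 3^n := by positivity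
      rw [hl]
      simp only []
      rw [div_lt_iff₀ h3]
      exact hnt n
    have htr : ∀ n, t < r n := by
      intro n
      have h3 : (0:ℝ) < 3^n := by positivity
      rw [hr]
      simp only []
      rw [lt_div_iff₀ h3]
      have := Int.lt_floor_add_one (t*3^n)
      exact this
    have hlmem : ∀ n, l n ∈ Set.Icc (0:ℝ) 1 := by
      intro n
      refine ⟨?_, le_trans (le_of_lt (hlt n)) (le_of_lt htlt)⟩
      have h3 : (0:ℝ) < 3^n := by positivity
      have := hk0 n
      have : (0:ℝ) ≤ (kk n : ℝ) := by exact_mod_cast this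
      positivity
    have hrmem : ∀ n, r n ∈ Set.Icc (0:ℝ) 1 := by
      intro n
      have h3 : (0:ℝ) < 3^n := by positivity
      constructor
      · have := hk0 n
        have h4 : (0:ℝ) ≤ (kk n : ℝ) := by exact_mod_cast this
        have : (0:ℝ) ≤ (kk n : ℝ) + 1 := by linarith
        positivity
      · rw [hr]
        simp only []
        rw [div_le_one h3]
        have h5 : kk n + 1 ≤ 3^n := hk1 n
        have h6 : ((kk n : ℝ)) + 1 ≤ ((3:ℤ)^n : ℝ) := by exact_mod_cast h5
        push_cast at h6
        linarith
    have hrl : ∀ n, r n - l n = 1/3^n := by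
      intro n
      simp only [hr, hl]
      ring
    -- convergence of R to c
    have h13 : Tendsto (fun n : ℕ => (1:ℝ)/3^n) atTop (𝓝 0) := by
      simp_rw [one_div, ← inv_pow]
      exact tendsto_pow_atTop_nhds_zero_of_lt_one (by norm_num) (by norm_num)
    have hltend : Tendsto l atTop (𝓝 t) := by
      have hsub : Tendsto (fun n : ℕ => t - 1/3^n) atTop (𝓝 t) := by
        have := tendsto_const_nhds.sub h13 (f := fun _ : ℕ => t)
        rw [sub_zero] at this
        exact this
      apply tendsto_of_tendsto_of_tendsto_of_le_of_le hsub tendsto_const_nhds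
      · intro n
        have := htr n
        have := hrl n
        linarith [htr n, hrl n]
      · exact fun n => le_of_lt (hlt n)
    have hrtend : Tendsto r atTop (𝓝 t) := by
      have hadd : Tendsto (fun n : ℕ => t + 1/3^n) atTop (𝓝 t) := by
        have := tendsto_const_nhds.add h13 (f := fun _ : ℕ => t)
        rw [add_zero] at this
        exact this
      apply tendsto_of_tendsto_of_tendsto_of_le_of_le tendsto_const_nhds hadd
      · exact fun n => le_of_lt (htr n)
      · intro n
        linarith [hlt n, hrl n]
    have hslope := hasDerivAt_iff_tendsto_slope.1 hder
    have hs1 : Tendsto (fun n => slope Gt t (l n)) atTop (𝓝 c) := by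
      apply hslope.comp
      apply tendsto_nhdsWithin_of_tendsto_nhds_of_eventually_within _ hltend
      exact Eventually.of_forall (fun n => ne_of_lt (hlt n))
    have hs2 : Tendsto (fun n => slope Gt t (r n)) atTop (𝓝 c) := by
      apply hslope.comp
      apply tendsto_nhdsWithin_of_tendsto_nhds_of_eventually_within _ hrtend
      exact Eventually.of_forall (fun n => (ne_of_lt (htr n)).symm)
    have hRid : ∀ n, R n = (t - l n)*3^n * slope Gt t (l n)
        + (r n - t)*3^n * slope Gt t (r n) := by
      intro n
      have hl_ne : l n - t ≠ 0 := by have := hlt n; intro h; linarith [sub_eq_zero.1 h]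
      have hr_ne : r n - t ≠ 0 := by have := htr n; intro h; linarith [sub_eq_zero.1 h]
      rw [slope_def_field, slope_def_field]
      rw [hGteq (l n) (hlmem n), hGteq (r n) (hrmem n),
        hGteq t ⟨le_of_lt htpos, le_of_lt htlt⟩]
      field_simp
      ring
    have hw : ∀ n, 0 ≤ (t - l n)*3^n ∧ 0 ≤ (r n - t)*3^n
        ∧ (t - l n)*3^n + (r n - t)*3^n = 1 := by
      intro n
      have h3 : (0:ℝ) < 3^n := by positivity
      refine ⟨by nlinarith [hlt n], by nlinarith [htr n], ?_⟩
      have := hrl n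
      have h4 : (r n - l n) * 3^n = 1 := by
        rw [this]
        field_simp
      nlinarith
    have habs : Tendsto (fun n => |R n - c|) atTop (𝓝 0) := by
      have hbound : ∀ n, |R n - c| ≤ |slope Gt t (l n) - c| + |slope Gt t (r n) - c| := by
        intro n
        obtain ⟨w1, w2, w3⟩ := hw n
        have hkey : R n - c = (t - l n)*3^n * (slope Gt t (l n) - c)
            + (r n - t)*3^n * (slope Gt t (r n) - c) := by
          rw [hRid n]
          linear_combination c * w3
        rw [hkey]
        have a1 : (t - l n)*3^n ≤ 1 := by linarith [w2, w3]
        have a2 : (r n - t)*3^n ≤ 1 := by linarith [w1, w3]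
        calc |(t - l n)*3^n * (slope Gt t (l n) - c)
            + (r n - t)*3^n * (slope Gt t (r n) - c)|
            ≤ |(t - l n)*3^n * (slope Gt t (l n) - c)|
              + |(r n - t)*3^n * (slope Gt t (r n) - c)| := abs_add_le _ _
          _ ≤ |slope Gt t (l n) - c| + |slope Gt t (r n) - c| := by
              rw [abs_mul ((t - l n)*3^n) _, abs_mul ((r n - t)*3^n) _,
                abs_of_nonneg w1, abs_of_nonneg w2]
              nlinarith [abs_nonneg (slope Gt t (l n) - c),
                abs_nonneg (slope Gt t (r n) - c)]
      have hz : Tendsto (fun n => |slope Gt t (l n) - c| + |slope Gt t (r n) - c|)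
          atTop (𝓝 0) := by
        have z1 : Tendsto (fun n => |slope Gt t (l n) - c|) atTop (𝓝 0) := by
          have := (hs1.sub (tendsto_const_nhds : Tendsto (fun _ : ℕ => c) atTop (𝓝 c))).abs
          simpa using this
        have z2 : Tendsto (fun n => |slope Gt t (r n) - c|) atTop (𝓝 0) := by
          have := (hs2.sub (tendsto_const_nhds : Tendsto (fun _ : ℕ => c) atTop (𝓝 c))).abs
          simpa using this
        simpa using z1.add z2
      exact squeeze_zero (fun n => abs_nonneg _) hbound hz
    have hRtend : Tendsto R atTop (𝓝 c) := by
      rw [tendsto_iff_dist_tendsto_zero]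
      simpa [Real.dist_eq] using habs
    have hc0 : 0 ≤ c := ge_of_tendsto' hRtend (fun n => le_of_lt (hRpos n))
    -- show c = 0
    have hczero : c = 0 := by
      by_contra hcne
      have hcpos : 0 < c := lt_of_le_of_ne hc0 (Ne.symm hcne)
      have hRshift : Tendsto (fun n => R (n+1)) atTop (𝓝 c) :=
        hRtend.comp (tendsto_add_atTop_nat 1)
      have hdiv : Tendsto (fun n => R (n+1) / R n) atTop (𝓝 1) := by
        have := hRshift.div hRtend (ne_of_gt hcpos)
        rw [div_self (ne_of_gt hcpos)] at this
        exact this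
      have hqeq : ∀ n, R (n+1) / R n = 3 * pOW a b ((d n).toNat) := by
        intro n
        have hR1 : R (n+1) = pOW a b ((d n).toNat) * S n * 3^(n+1) := by
          simp only [hR]
          rw [hrec n]
        rw [hR1]
        simp only [hR]
        have hSne : S n ≠ 0 := ne_of_gt (hSpos n)
        have h3 : (3:ℝ)^n ≠ 0 := by positivity
        field_simp
        ring
      rw [funext hqeq] at hdiv
      -- epsilon argument
      set e : ℕ → ℝ := fun i => if 3 * pOW a b i = 1 then 1 else |3 * pOW a b i - 1| with he
      have hepos : ∀ i, 0 < e i := by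
        intro i
        simp only [he]
        split_ifs with h
        · norm_num
        · exact abs_pos.2 (sub_ne_zero.2 h)
      set ε : ℝ := min (min (e 0) (e 1)) (e 2) with hε
      have hεpos : 0 < ε := lt_min (lt_min (hepos 0) (hepos 1)) (hepos 2)
      have hev : ∀ᶠ n in atTop, |3 * pOW a b ((d n).toNat) - 1| < ε := by
        have := Metric.tendsto_atTop.1 hdiv
        obtain ⟨N, hN⟩ := this ε hεpos
        refine eventually_atTop.2 ⟨N, fun n hn => ?_⟩
        have := hN n hn
        rwa [Real.dist_eq] at this
      have hevp : ∀ᶠ n in atTop, pOW a b ((d n).toNat) = 1/3 := by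
        filter_upwards [hev] with n hn
        have hi := hdNlt n
        have hεle : ε ≤ e ((d n).toNat) := by
          interval_cases h : ((d n).toNat)
          · exact le_trans (min_le_left _ _) (min_le_left _ _)
          · exact le_trans (min_le_left _ _) (min_le_right _ _)
          · exact min_le_right _ _
        by_contra hne2
        have h31 : 3 * pOW a b ((d n).toNat) ≠ 1 := by
          intro h
          apply hne2
          linarith
        have : e ((d n).toNat) = |3 * pOW a b ((d n).toNat) - 1| := by
          simp only [he]
          rw [if_neg h31]
        rw [this] at hεle
        linarith
      obtain ⟨N, hN⟩ := eventually_atTop.1 hevp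
      have huniq : ∀ i j : ℕ, i < 3 → j < 3 → pOW a b i = 1/3 → pOW a b j = 1/3 → i = j := by
        intro i j hi hj hpi hpj
        interval_cases i <;> interval_cases j <;>
          simp only [pOW] at hpi hpj <;> norm_num at hpi hpj <;>
          first
            | rfl
            | (exfalso; exact hne ⟨by linarith, by linarith⟩)
      set i0 : ℕ := (d N).toNat with hi0
      have hp0 : pOW a b i0 = 1/3 := hN N le_rfl
      have hdn : ∀ n, N ≤ n → d n = (i0 : ℤ) := by
        intro n hn
        have h1 : pOW a b ((d n).toNat) = 1/3 := hN n hn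
        have h2 : (d n).toNat = i0 := huniq _ _ (hdNlt n) (hdNlt N) h1 hp0
        have := hd0 n
        omega
      set x : ℝ := t * 3^N - kk N with hx
      have hx0 : 0 < x := by
        have := hnt N
        simp only [hx]
        linarith [hnt N]
      have hx1 : x < 1 := by
        have := Int.lt_floor_add_one (t * 3^N)
        simp only [hx]
        linarith
      have hiter : ∀ m : ℕ, t * 3^(N+m) - kk (N+m) = 3^m * x - (i0:ℝ) * (3^m - 1)/2 := by
        intro m
        induction m with
        | zero => simp [hx]
        | succ m ih =>
          have hk' : kk (N+m+1) = 3 * kk (N+m) + i0 := by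
            rw [hdrec (N+m)]
            rw [hdn (N+m) (by omega)]
          have hcast' : ((kk (N+m+1) : ℝ)) = 3 * ((kk (N+m) : ℝ)) + (i0:ℝ) := by
            exact_mod_cast congrArg (fun z : ℤ => (z:ℝ)) hk'
          have hNm : N + (m+1) = (N+m) + 1 := by omega
          have hp2 : t * 3^((N+m)+1) = 3 * (t * 3^(N+m)) := by ring
          rw [hNm, hcast', hp2]
          have hE : t * 3^(N+m) = ((kk (N+m) : ℝ)) + (3^m * x - (i0:ℝ)*(3^m-1)/2) := by
            linarith [ih]
          rw [hE]
          push_cast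
          ring
      have hfrac : ∀ m : ℕ, 0 ≤ t * 3^(N+m) - ((kk (N+m) : ℝ))
          ∧ t * 3^(N+m) - ((kk (N+m) : ℝ)) < 1 := by
        intro m
        have hkm : kk (N+m) = ⌊t*3^(N+m)⌋ := congrFun hkk (N+m)
        rw [hkm]
        constructor
        · linarith [Int.floor_le (t * 3^(N+m))]
        · linarith [Int.lt_floor_add_one (t * 3^(N+m))]
      have hi0lt : i0 < 3 := hdNlt N
      have hi2 : (0:ℝ) ≤ (i0:ℝ)/2 ∧ (i0:ℝ)/2 ≤ 1 := by
        constructor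
        · positivity
        · have : (i0:ℝ) ≤ 2 := by exact_mod_cast Nat.lt_succ_iff.1 hi0lt
          linarith
      have hxval : x = (i0:ℝ)/2 := by
        by_contra hxne
        have hy : 0 < |x - (i0:ℝ)/2| := abs_pos.2 (sub_ne_zero.2 hxne)
        obtain ⟨m, hm⟩ := pow_unbounded_of_one_lt (1/|x - (i0:ℝ)/2|) (by norm_num : (1:ℝ) < 3)
        have h3m : (0:ℝ) < 3^m := by positivity
        have hgt : 1 < 3^m * |x - (i0:ℝ)/2| := by
          rw [div_lt_iff₀ hy] at hm
          nlinarith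
        have hfr := hfrac m
        have hit := hiter m
        have hexp : 3^m*x - (i0:ℝ)*(3^m-1)/2 = 3^m*(x - (i0:ℝ)/2) + (i0:ℝ)/2 := by ring
        have hbd1 : -1 ≤ 3^m * (x - (i0:ℝ)/2) := by linarith [hfr.1, hit, hexp, hi2.2]
        have hbd2 : 3^m * (x - (i0:ℝ)/2) < 1 := by linarith [hfr.2, hit, hexp, hi2.1]
        have hble : |3^m * (x - (i0:ℝ)/2)| ≤ 1 := abs_le.2 ⟨hbd1, le_of_lt hbd2⟩
        rw [abs_mul, abs_of_pos h3m] at hble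
        linarith
      apply hC
      refine ⟨(2 * kk N + (i0:ℤ), N), ?_⟩
      have h3N : (0:ℝ) < 3^N := by positivity
      simp only []
      push_cast
      have hxv : t * 3^N - ((kk N : ℝ)) = (i0:ℝ)/2 := by
        rw [← hx]; exact hxval
      field_simp
      nlinarith [hxv]
    -- conclude
    have hder0 : HasDerivAt Gt 0 t := hczero ▸ hder
    have h1 := hder0.hasDerivWithinAt (s := Set.Icc (0:ℝ) 1)
    exact h1.congr (fun y hy => (hGteq y hy).symm)
      ((hGteq t ⟨le_of_lt htpos, le_of_lt htlt⟩).symm)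
  have hdiffae : ∀ᵐ x ∂(volume : Measure ℝ), DifferentiableAt ℝ Gt x :=
    hGtmono.ae_differentiableAt
  have hCnull : (volume : Measure ℝ) C = 0 := hCc.measure_zero _
  have hCae : ∀ᵐ x ∂(volume : Measure ℝ), x ∉ C := measure_eq_zero_iff_ae_notMem.1 hCnull
  filter_upwards [ae_restrict_of_ae hdiffae, ae_restrict_of_ae hCae,
    ae_restrict_mem measurableSet_Ioo] with t h1 h2 h3
  exact claim t h3 h2 h1
end

/-- **Example 2.1 (iii): singularity of the Okamoto–Wunsch functions.**
For `0 < a < b < 1` and the unique continuous solution `G = f_{a,b}` of de Rham's equation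
for `f₀(x) = ax`, `f₁(x) = a + (b-a)x`, `f₂(x) = (1-b)x + b` (`m = 3`), one has
`α = -log₃(a(b-a)(1-b))/3`, `α > 1 ↔ (a,b) ≠ (1/3,2/3)`, and if `(a,b) ≠ (1/3,2/3)` then
`f_{a,b}` is strictly increasing with derivative `0` Lebesgue-a.e.; i.e. it is singular. -/
theorem okamotoWunsch_singular (a b : ℝ) (ha : 0 < a) (hab : a < b) (hb : b < 1)
    (G : ℝ → ℝ)
    (hGc : ContinuousOn G (Set.Icc 0 1))
    (hGX : Set.MapsTo G (Set.Icc 0 1) (Set.Icc 0 1))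
    (hGeq : ∀ i : ℕ, i < 3 → ∀ t : ℝ, (i : ℝ) / 3 ≤ t → t ≤ ((i : ℝ) + 1) / 3 →
      G t = fOW a b i (G (3 * t - i)))
    (hG0 : G 0 = 0) (hG1 : G 1 = 1) :
    alphaOW a b G = -Real.logb 3 (a * (b - a) * (1 - b)) / 3 ∧
    (1 < alphaOW a b G ↔ ¬(a = 1 / 3 ∧ b = 2 / 3)) ∧
    (¬(a = 1 / 3 ∧ b = 2 / 3) →
      StrictMonoOn G (Set.Icc (0 : ℝ) 1) ∧
      ∀ᵐ t ∂(volume.restrict (Set.Ioo (0 : ℝ) 1)),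
        HasDerivWithinAt G 0 (Set.Icc (0 : ℝ) 1) t) := by
  have h1 := alphaOW_eq a b ha hab hb G
  refine ⟨h1, ?_, fun hne => ?_⟩
  · rw [h1]
    exact part2 a b ha hab hb
  · exact ⟨keyF a b G hGeq hG0 hG1 ha hab hb hGc,
      keyG a b G hGeq hG0 hG1 ha hab hb hGc hne⟩
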